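/- Let d, l, m be positive integers, let λ ≥ 1 be a real number, and let x₁, …, x_m ∈ ℝ^d satisfy ‖x_i‖₂ ≤ 1 for all i. Suppose that for every index i with 2 ≤ i ≤ m, one has x_iᵀ (λ·I_d + Σ_{j=1}^{i−1} x_j x_jᵀ)^{−1} x_i ≥ 4^{−l}. Then m ≤ 17 · d · l · 4^l. -/

import Mathlib

open Matrix Finset


variable {d : ℕ}

lemma aux_posSemidef_vecMulVec (v : Fin d → ℝ) : (vecMulVec v v).PosSemidef := by
  rw [Matrix.vecMulVec_eq Unit]
  simpa using Matrix.posSemidef_self_mul_conjTranspose (Matrix.replicateCol Unit v)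

lemma aux_posDef_smul_one {lam : ℝ} (hlam : 0 < lam) :
    (lam • (1 : Matrix (Fin d) (Fin d) ℝ)).PosDef := by
  refine Matrix.PosDef.of_dotProduct_mulVec_pos ?_ ?_
  · simp [Matrix.IsHermitian]
  · intro x hx
    have h1 : (lam • (1 : Matrix (Fin d) (Fin d) ℝ)) *ᵥ x = lam • x := by
      simp [Matrix.smul_mulVec]
    rw [h1]
    have hne : x ⬝ᵥ x ≠ 0 := fun h => hx (dotProduct_self_eq_zero.mp h)
    have : (0:ℝ) < x ⬝ᵥ x :=
      lt_of_le_of_ne (by simpa using dotProduct_star_self_nonneg x) (Ne.symm hne)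
    simpa [dotProduct_smul, smul_eq_mul, star_trivial] using mul_pos hlam this

lemma aux_posSemidef_sum (s : Finset ℕ) (f : ℕ → Fin d → ℝ) :
    (∑ j ∈ s, vecMulVec (f j) (f j)).PosSemidef := by
  classical
  induction s using Finset.induction_on with
  | empty => simpa using Matrix.PosSemidef.zero
  | insert _ _ h ih =>
    rw [Finset.sum_insert h]
    exact (aux_posSemidef_vecMulVec _).add ih

lemma aux_det_add_vecMulVec {A : Matrix (Fin d) (Fin d) ℝ} (hA : A.PosDef) (v : Fin d → ℝ) :
    (A + vecMulVec v v).det = A.det * (1 + v ⬝ᵥ A⁻¹ *ᵥ v) := by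
  rw [Matrix.vecMulVec_eq Unit,
    Matrix.det_add_replicateCol_mul_replicateRow (isUnit_iff_ne_zero.mpr hA.det_pos.ne') v v]
  congr 1
  rw [Matrix.det_unique]
  simp only [Matrix.add_apply, Matrix.one_apply_eq]
  congr 1
  simp [Matrix.mul_apply, Matrix.replicateRow_apply, Matrix.replicateCol_apply, Matrix.mulVec, dotProduct,
    Finset.sum_mul, Finset.mul_sum, mul_assoc, mul_comm, mul_left_comm]
  rw [Finset.sum_comm]
  exact Finset.sum_congr rfl fun i _ => Finset.sum_congr rfl fun j _ => by ring

lemma aux_trace_eq_sum_eigenvalues {A : Matrix (Fin d) (Fin d) ℝ} (hA : A.IsHermitian) :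
    A.trace = ∑ i, hA.eigenvalues i := by
  simpa using hA.trace_eq_sum_eigenvalues

lemma aux_det_le_pow_trace {A : Matrix (Fin d) (Fin d) ℝ} (hA : A.PosSemidef) (hd : 0 < d) :
    A.det ≤ (A.trace / d) ^ d := by
  have hH := hA.isHermitian
  have hev : ∀ i, 0 ≤ hH.eigenvalues i := hA.eigenvalues_nonneg
  have hdet : A.det = ∏ i, hH.eigenvalues i := by
    simpa using hH.det_eq_prod_eigenvalues
  have htr : A.trace = ∑ i, hH.eigenvalues i := aux_trace_eq_sum_eigenvalues hH
  rw [hdet, htr]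
  have hd' : (0:ℝ) < d := by exact_mod_cast hd
  have amgm := Real.geom_mean_le_arith_mean_weighted Finset.univ
    (fun _ : Fin d => (d : ℝ)⁻¹) hH.eigenvalues
    (fun _ _ => by positivity)
    (by simp [Finset.card_univ]; field_simp)
    (fun i _ => hev i)
  have key : (∏ i, hH.eigenvalues i ^ ((d:ℝ)⁻¹)) ^ (d:ℕ)
      = ∏ i, hH.eigenvalues i := by
    rw [← Finset.prod_pow]
    refine Finset.prod_congr rfl fun i _ => ?_
    rw [← Real.rpow_natCast (hH.eigenvalues i ^ ((d:ℝ)⁻¹)) d, ← Real.rpow_mul (hev i)]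
    rw [inv_mul_cancel₀ hd'.ne', Real.rpow_one]
  calc ∏ i, hH.eigenvalues i = (∏ i, hH.eigenvalues i ^ ((d:ℝ)⁻¹)) ^ (d:ℕ) := key.symm
    _ ≤ (∑ i, (d:ℝ)⁻¹ * hH.eigenvalues i) ^ (d:ℕ) := by
        apply pow_le_pow_left₀ (Finset.prod_nonneg fun i _ => Real.rpow_nonneg (hev i) _) amgm
    _ = ((∑ i, hH.eigenvalues i) / d) ^ d := by
        rw [← Finset.mul_sum]; ring_nf

lemma aux_quad_nonneg {A : Matrix (Fin d) (Fin d) ℝ} (hA : A.PosSemidef) (v : Fin d → ℝ) :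
    0 ≤ v ⬝ᵥ A *ᵥ v := by simpa using hA.dotProduct_mulVec_nonneg v

lemma aux_trace_vecMulVec (v : Fin d → ℝ) : (vecMulVec v v).trace = v ⬝ᵥ v := by
  simp [Matrix.trace, Matrix.diag, Matrix.vecMulVec_apply, dotProduct]

lemma aux_numeric (l : ℕ) (hl : 1 ≤ l) (s : ℝ) (hs : 17 * l * 4 ^ l < s)
    (h : (4/5) * (s - 1) ≤ 4 ^ l * Real.log (1 + s)) : False := by
  have hL : (1:ℝ) ≤ l := by exact_mod_cast hl
  have h4 : (4:ℝ) ≤ 4 ^ l := by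
    calc (4:ℝ) = 4 ^ 1 := (pow_one 4).symm
    _ ≤ 4 ^ l := pow_le_pow_right₀ (by norm_num) hl
  have h4pos : (0:ℝ) < 4 ^ l := by positivity
  have hs0 : (0:ℝ) < 1 + s := by nlinarith
  have h16 : ((16:ℝ)) ^ l = 4 ^ l * 4 ^ l := by
    rw [show (16:ℝ) = 4 * 4 by norm_num, mul_pow]
  have hlog16 : Real.log 16 = 4 * Real.log 2 := by
    rw [show (16:ℝ) = 2 ^ 4 by norm_num, Real.log_pow]; push_cast; ring
  have h16pos : (0:ℝ) < 16 ^ l := by positivity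
  have hlog1 : Real.log ((1 + s) / 16 ^ l) ≤ (1 + s) / 16 ^ l - 1 :=
    Real.log_le_sub_one_of_pos (by positivity)
  rw [Real.log_div hs0.ne' h16pos.ne', Real.log_pow] at hlog1
  -- log (1+s) ≤ (1+s)/16^l + l * log 16 - 1
  have hlog2 : Real.log 2 < 0.6931471808 := Real.log_two_lt_d9
  have hdiv : 4 ^ l * ((1 + s) / 16 ^ l) = (1 + s) / 4 ^ l := by
    rw [h16]; field_simp
  have hq : (1 + s) / 4 ^ l ≤ (1 + s) / 4 :=
    div_le_div_of_nonneg_left hs0.le (by norm_num) h4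
  have hmain : 4 ^ l * Real.log (1 + s) ≤ (1 + s) / 4 + 4 ^ l * ((l:ℝ) * Real.log 16 - 1) := by
    have := mul_le_mul_of_nonneg_left hlog1 h4pos.le
    nlinarith [hdiv, hq]
  have hlog16' : (l:ℝ) * Real.log 16 < 2.7725888 * l := by
    rw [hlog16]; nlinarith
  have hl4 : (4:ℝ) ≤ (l:ℝ) * 4 ^ l := by nlinarith
  nlinarith [mul_le_mul_of_nonneg_left hlog16'.le h4pos.le, mul_lt_mul_of_pos_left hlog16' h4pos]
/-- If every `x_i` (for `2 ≤ i ≤ m`) has squared confidence width at least `4^{-l}`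
against the regularized covariance matrix of the previous elements, then
`m ≤ 17 d l 4^l`. -/
theorem level_set_size_bound
    (d l m : ℕ) (hd : 0 < d) (hl : 0 < l) (hm : 0 < m)
    (lam : ℝ) (hlam : 1 ≤ lam)
    (x : ℕ → Fin d → ℝ)
    (hx : ∀ i ∈ Finset.Icc 1 m, Real.sqrt (x i ⬝ᵥ x i) ≤ 1)
    (hlow : ∀ i : ℕ, 2 ≤ i → i ≤ m →
      ((4 : ℝ) ^ l)⁻¹ ≤
        x i ⬝ᵥ ((lam • (1 : Matrix (Fin d) (Fin d) ℝ)
          + ∑ j ∈ Finset.Icc 1 (i - 1), Matrix.vecMulVec (x j) (x j))⁻¹).mulVec (x i)) :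
    (m : ℝ) ≤ 17 * d * l * 4 ^ l := by
  classical
  set ε : ℝ := ((4:ℝ) ^ l)⁻¹ with hεdef
  have h4pos : (0:ℝ) < 4 ^ l := by positivity
  have hεpos : 0 < ε := by positivity
  have hlam0 : (0:ℝ) < lam := lt_of_lt_of_le one_pos hlam
  set V : ℕ → Matrix (Fin d) (Fin d) ℝ :=
    fun i => lam • (1 : Matrix (Fin d) (Fin d) ℝ)
      + ∑ j ∈ Finset.Icc 1 i, Matrix.vecMulVec (x j) (x j) with hVdef
  have hVpos : ∀ i, (V i).PosDef := fun i =>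
    (aux_posDef_smul_one hlam0).add_posSemidef (aux_posSemidef_sum _ _)
  have hstep : ∀ i, V (i+1) = V i + vecMulVec (x (i+1)) (x (i+1)) := by
    intro i
    simp only [hVdef]
    rw [Finset.sum_Icc_succ_top (by omega : 1 ≤ i + 1), add_assoc]
  -- lower bound on determinant
  have hdet_lb : ∀ i, 1 ≤ i → i ≤ m → lam ^ d * (1 + ε) ^ (i - 1) ≤ (V i).det := by
    intro i hi1
    induction i, hi1 using Nat.le_induction with
    | base =>
      intro _
      have hV1 : V 1 = lam • (1 : Matrix (Fin d) (Fin d) ℝ) + vecMulVec (x 1) (x 1) := by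
        simp [hVdef]
      have hdet1 : (V 1).det
          = (lam • (1 : Matrix (Fin d) (Fin d) ℝ)).det
            * (1 + x 1 ⬝ᵥ (lam • (1 : Matrix (Fin d) (Fin d) ℝ))⁻¹ *ᵥ x 1) := by
        rw [hV1, aux_det_add_vecMulVec (aux_posDef_smul_one hlam0)]
      have hq : 0 ≤ x 1 ⬝ᵥ (lam • (1 : Matrix (Fin d) (Fin d) ℝ))⁻¹ *ᵥ x 1 :=
        aux_quad_nonneg (aux_posDef_smul_one hlam0).inv.posSemidef _
      have hdetsmul : (lam • (1 : Matrix (Fin d) (Fin d) ℝ)).det = lam ^ d := by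
        simp [Matrix.det_smul]
      rw [hdet1, hdetsmul]
      simp only [Nat.sub_self, pow_zero, mul_one]
      nlinarith [pow_pos hlam0 d]
    | succ i hi1 ih =>
      intro him
      have hdetrec : (V (i+1)).det = (V i).det * (1 + x (i+1) ⬝ᵥ (V i)⁻¹ *ᵥ x (i+1)) := by
        rw [hstep i, aux_det_add_vecMulVec (hVpos i)]
      have hqlow : ε ≤ x (i+1) ⬝ᵥ (V i)⁻¹ *ᵥ x (i+1) := by
        have h := hlow (i+1) (by omega) him
        rw [Nat.add_sub_cancel] at h
        simp only [hVdef]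
        exact h
      have hprev := ih (by omega)
      have hVidet_pos : 0 < (V i).det := (hVpos i).det_pos
      have hmono : lam ^ d * (1 + ε) ^ (i - 1) * (1 + ε)
          ≤ (V i).det * (1 + x (i+1) ⬝ᵥ (V i)⁻¹ *ᵥ x (i+1)) := by
        apply mul_le_mul hprev (by linarith) (by positivity) hVidet_pos.le
      rw [hdetrec]
      calc lam ^ d * (1 + ε) ^ (i + 1 - 1)
          = lam ^ d * (1 + ε) ^ (i - 1) * (1 + ε) := by
            rw [mul_assoc, ← pow_succ]
            congr 2
            omega
        _ ≤ _ := hmono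
  -- trace bound
  have htrace : (V m).trace ≤ d * lam + m := by
    have htreq : (V m).trace = (d:ℝ) * lam + ∑ j ∈ Finset.Icc 1 m, (x j ⬝ᵥ x j) := by
      simp only [hVdef, Matrix.trace_add, Matrix.trace_smul, Matrix.trace_one, Matrix.trace_sum]
      simp only [aux_trace_vecMulVec, smul_eq_mul]
      rw [Fintype.card_fin]
      ring
    rw [htreq]
    have hsum : ∑ j ∈ Finset.Icc 1 m, (x j ⬝ᵥ x j) ≤ ∑ j ∈ Finset.Icc 1 m, (1:ℝ) := by
      apply Finset.sum_le_sum
      intro j hj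
      have h0 : 0 ≤ x j ⬝ᵥ x j := by
        simpa using dotProduct_star_self_nonneg (x j)
      have := hx j hj
      nlinarith [Real.sq_sqrt h0, Real.sqrt_nonneg (x j ⬝ᵥ x j)]
    have hcard : ∑ j ∈ Finset.Icc 1 m, (1:ℝ) = m := by
      simp [Nat.card_Icc]
    linarith [hsum, hcard ▸ hsum]
  -- upper bound on determinant
  have hdpos : (0:ℝ) < d := by exact_mod_cast hd
  set s : ℝ := m / d with hsdef
  have hmpos : (0:ℝ) < m := by exact_mod_cast hm
  have hspos : 0 < s := by positivity
  have htr0 : 0 ≤ (V m).trace := by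
    rw [aux_trace_eq_sum_eigenvalues (hVpos m).posSemidef.isHermitian]
    exact Finset.sum_nonneg fun i _ => (hVpos m).posSemidef.eigenvalues_nonneg i
  have hdet_ub : (V m).det ≤ lam ^ d * (1 + s) ^ d := by
    have h1 : (V m).det ≤ ((V m).trace / d) ^ d := aux_det_le_pow_trace (hVpos m).posSemidef hd
    have h2 : (V m).trace / d ≤ lam * (1 + s) := by
      rw [div_le_iff₀ hdpos]
      have : (d:ℝ) * lam + m ≤ lam * (1 + s) * d := by
        have hms : (m:ℝ) = s * d := by rw [hsdef]; field_simp
        nlinarith [hms, hspos, hlam, hdpos]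
      linarith [htrace]
    calc (V m).det ≤ ((V m).trace / d) ^ d := h1
      _ ≤ (lam * (1 + s)) ^ d := pow_le_pow_left₀ (by positivity) h2 d
      _ = lam ^ d * (1 + s) ^ d := mul_pow _ _ _
  -- cancel lam^d
  have hcancel : (1 + ε) ^ (m - 1) ≤ (1 + s) ^ d := by
    have hchain := le_trans (hdet_lb m (by omega) le_rfl) hdet_ub
    exact le_of_mul_le_mul_left hchain (pow_pos hlam0 d)
  have h1ε : (0:ℝ) < 1 + ε := by linarith
  have h1s : (0:ℝ) < 1 + s := by linarith
  -- take logs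
  have hlogchain : ((m:ℝ) - 1) * Real.log (1 + ε) ≤ (d:ℝ) * Real.log (1 + s) := by
    have hlog := Real.log_le_log (by positivity) hcancel
    rw [Real.log_pow, Real.log_pow] at hlog
    have hm1 : ((m - 1 : ℕ) : ℝ) = (m:ℝ) - 1 := by
      have h1m : 1 ≤ m := hm
      push_cast [Nat.cast_sub h1m]
      ring
    rw [hm1] at hlog
    exact_mod_cast hlog
  -- lower bound on log(1+ε)
  have hε14 : ε ≤ 1/4 := by
    rw [hεdef]
    have h44 : (4:ℝ) ≤ 4 ^ l := by
      calc (4:ℝ) = 4 ^ 1 := (pow_one 4).symm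
      _ ≤ 4 ^ l := pow_le_pow_right₀ (by norm_num) hl
    rw [show (1:ℝ)/4 = ((4:ℝ))⁻¹ by norm_num]
    exact inv_anti₀ (by norm_num) h44
  have hloglb : (4/5) * ε ≤ Real.log (1 + ε) := by
    have h1 : Real.log ((1+ε)⁻¹) ≤ (1+ε)⁻¹ - 1 := Real.log_le_sub_one_of_pos (by positivity)
    rw [Real.log_inv] at h1
    have hinv : (1+ε)⁻¹ * (1+ε) = 1 := inv_mul_cancel₀ h1ε.ne'
    nlinarith [h1, hinv, hεpos, hε14]
  -- contradiction setup
  by_contra hcon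
  push_neg at hcon
  have hsgt : 17 * (l:ℝ) * 4 ^ l < s := by
    rw [hsdef, lt_div_iff₀ hdpos]
    calc 17 * (l:ℝ) * 4 ^ l * d = 17 * d * l * 4 ^ l := by ring
      _ < m := hcon
  have hfin : (4/5) * (s - 1) ≤ 4 ^ l * Real.log (1 + s) := by
    have hm1 : (0:ℝ) ≤ (m:ℝ) - 1 := by
      have : (1:ℝ) ≤ m := by exact_mod_cast hm
      linarith
    have hstep1 : ((m:ℝ) - 1) * ((4/5) * ε) ≤ (d:ℝ) * Real.log (1 + s) :=
      le_trans (mul_le_mul_of_nonneg_left hloglb hm1) hlogchain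
    have hds : (m:ℝ) = d * s := by rw [hsdef]; field_simp
    have hd1 : (1:ℝ) ≤ d := by exact_mod_cast hd
    have key : (d:ℝ) * ((s - 1) * ((4/5) * ε)) ≤ (d:ℝ) * Real.log (1 + s) := by
      nlinarith [hstep1, hds, hd1, hεpos]
    have hstep3 : (s - 1) * ((4/5) * ε) ≤ Real.log (1 + s) :=
      le_of_mul_le_mul_left key hdpos
    have hmul := mul_le_mul_of_nonneg_left hstep3 h4pos.le
    have hε4 : ε * 4 ^ l = 1 := by rw [hεdef]; field_simp
    have hlhs : (4:ℝ) ^ l * ((s - 1) * ((4/5) * ε)) = (4/5) * (s - 1) := by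
      linear_combination ((4:ℝ)/5 * (s - 1)) * hε4
    rw [hlhs] at hmul
    linarith
  exact aux_numeric l hl s hsgt hfin
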